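/- arXiv:math/0703860 — 2 statements merged into one kernel-verified Lean document; each statement's English description precedes it below -/
import Mathlib

section
/- No circle-center set is in general position: if S ⊆ ℝ² is not contained in any affine line and contains its circle centers, then S contains three distinct points that are collinear. -/
open Real EuclideanGeometry

/-- A set in the Euclidean plane contains its circle centers if, whenever it contains
three non-collinear points, it contains the point equidistant from all three
(the circumcenter of the triangle they form). -/
def ContainsCircleCenters (S : Set (EuclideanSpace ℝ (Fin 2))) : Prop :=
  ∀ A ∈ S, ∀ B ∈ S, ∀ C ∈ S,
    ¬ Collinear ℝ ({A, B, C} : Set (EuclideanSpace ℝ (Fin 2))) →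
    ∀ O : EuclideanSpace ℝ (Fin 2),
      dist O A = dist O B → dist O A = dist O C → O ∈ S

local notation "E" => EuclideanSpace ℝ (Fin 2)

/-- Existence of a circumcenter for a non-collinear triple. -/
lemma exists_equidistant {A B C : E} (h : ¬ Collinear ℝ ({A, B, C} : Set (EuclideanSpace ℝ (Fin 2)))) :
    ∃ O : E, dist O A = dist O B ∧ dist O A = dist O C := by
  have hai : AffineIndependent ℝ ![A, B, C] := affineIndependent_iff_not_collinear_set.mpr h
  let s : Affine.Simplex ℝ E 2 := ⟨![A, B, C], hai⟩
  refine ⟨s.circumcenter, ?_, ?_⟩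
  · have h0 := s.dist_circumcenter_eq_circumradius' 0
    have h1 := s.dist_circumcenter_eq_circumradius' 1
    simp only [s, Matrix.cons_val_zero, Matrix.cons_val_one, Matrix.head_cons] at h0 h1
    rw [h0, h1]
  · have h0 := s.dist_circumcenter_eq_circumradius' 0
    have h2 := s.dist_circumcenter_eq_circumradius' 2
    simp only [s, Matrix.cons_val_zero, Matrix.cons_val_two, Matrix.tail_cons, Matrix.head_cons] at h0 h2
    rw [h0, h2]

/-- Three points equidistant from two distinct points are collinear. -/
lemma collinear_of_dist_eq {A B : E} (hAB : A ≠ B) {P Q R : E}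
    (hP : dist P A = dist P B) (hQ : dist Q A = dist Q B) (hR : dist R A = dist R B) :
    Collinear ℝ ({P, Q, R} : Set (EuclideanSpace ℝ (Fin 2))) := by
  have hsub : ({P, Q, R} : Set E) ⊆ (AffineSubspace.perpBisector A B : Set E) := by
    intro x hx
    simp only [Set.mem_insert_iff, Set.mem_singleton_iff] at hx
    rcases hx with rfl | rfl | rfl <;>
      simpa [AffineSubspace.mem_perpBisector_iff_dist_eq] using ‹_›
  have hle : vectorSpan ℝ ({P, Q, R} : Set E) ≤ (AffineSubspace.perpBisector A B).direction :=
    vectorSpan_mono ℝ hsub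
  have hv : (B -ᵥ A : E) ≠ 0 := vsub_ne_zero.2 hAB.symm
  have hfr : Module.finrank ℝ ((AffineSubspace.perpBisector A B).direction) = 1 := by
    rw [AffineSubspace.direction_perpBisector]
    have h1 : Module.finrank ℝ (ℝ ∙ (B -ᵥ A : E)) = 1 := finrank_span_singleton hv
    have h2 := Submodule.finrank_add_finrank_orthogonal (K := (ℝ ∙ (B -ᵥ A : E)))
    have h3 : Module.finrank ℝ E = 2 := finrank_euclideanSpace_fin
    omega
  rw [collinear_iff_finrank_le_one]
  calc Module.finrank ℝ (vectorSpan ℝ ({P, Q, R} : Set E))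
      ≤ Module.finrank ℝ ((AffineSubspace.perpBisector A B).direction) :=
        Submodule.finrank_mono hle
    _ ≤ 1 := hfr.le

/-- A vector orthogonal to two nonzero orthogonal vectors in the plane is zero. -/
lemma eq_zero_of_inner_eq_zero {u v w : E} (hu : u ≠ 0) (hv : v ≠ 0)
    (huv : inner ℝ u v = (0:ℝ)) (hw1 : inner ℝ u w = (0:ℝ)) (hw2 : inner ℝ v w = (0:ℝ)) :
    w = 0 := by
  have hli : LinearIndependent ℝ ![u, v] := by
    rw [LinearIndependent.pair_iff]
    intro s t hst
    have h1 : (inner ℝ u (s • u + t • v) : ℝ) = 0 := by rw [hst, inner_zero_right]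
    have h2 : (inner ℝ v (s • u + t • v) : ℝ) = 0 := by rw [hst, inner_zero_right]
    rw [inner_add_right, real_inner_smul_right, real_inner_smul_right, huv,
      real_inner_self_eq_norm_sq, mul_zero, add_zero, mul_eq_zero] at h1
    have huv' : (inner ℝ v u : ℝ) = 0 := by rw [real_inner_comm]; exact huv
    rw [inner_add_right, real_inner_smul_right, real_inner_smul_right,
      huv', real_inner_self_eq_norm_sq, mul_zero, zero_add,
      mul_eq_zero] at h2
    have hnu : ‖u‖ ^ 2 ≠ 0 := pow_ne_zero _ (norm_ne_zero_iff.2 hu)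
    have hnv : ‖v‖ ^ 2 ≠ 0 := pow_ne_zero _ (norm_ne_zero_iff.2 hv)
    exact ⟨h1.resolve_right hnu, h2.resolve_right hnv⟩
  have hspan : Submodule.span ℝ ({u, v} : Set E) = ⊤ := by
    apply Submodule.eq_top_of_finrank_eq
    have hr : ({u, v} : Set E) = Set.range ![u, v] := by
      ext x; simp [Matrix.range_cons, Matrix.range_empty]; tauto
    rw [hr, finrank_span_eq_card hli]
    simp [finrank_euclideanSpace_fin]
  have hw : w ∈ Submodule.span ℝ ({u, v} : Set E) := hspan ▸ Submodule.mem_top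
  rw [Submodule.mem_span_pair] at hw
  obtain ⟨a, b, hab⟩ := hw
  have hz : (inner ℝ w w : ℝ) = 0 := by
    nth_rewrite 1 [← hab]
    rw [inner_add_left, real_inner_smul_left, real_inner_smul_left, hw1, hw2]
    ring
  exact inner_self_eq_zero.mp hz

/-- Four pairwise equidistant points cannot exist in the plane. -/
lemma no_four_equidistant {A B P Q : E} (hAB : A ≠ B)
    (h1 : dist A P = dist A B) (h2 : dist A Q = dist A B)
    (h3 : dist B P = dist A B) (h4 : dist B Q = dist A B)
    (h5 : dist P Q = dist A B) : False := by
  set c := dist A B with hc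
  have hc0 : c ≠ 0 := dist_ne_zero.2 hAB
  set a : E := P - A with ha
  set b : E := B - A with hb
  set q : E := Q - A with hq
  have nb : ‖b‖ = c := by rw [hb, ← dist_eq_norm, dist_comm]
  have na : ‖a‖ = c := by rw [ha, ← dist_eq_norm, dist_comm, h1]
  have nq : ‖q‖ = c := by rw [hq, ← dist_eq_norm, dist_comm, h2]
  have nab : ‖a - b‖ = c := by
    have : a - b = P - B := by rw [ha, hb]; abel
    rw [this, ← dist_eq_norm, dist_comm, h3]
  have nqb : ‖q - b‖ = c := by
    have : q - b = Q - B := by rw [hq, hb]; abel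
    rw [this, ← dist_eq_norm, dist_comm, h4]
  have nqa : ‖q - a‖ = c := by
    have : q - a = Q - P := by rw [hq, ha]; abel
    rw [this, ← dist_eq_norm, dist_comm, h5]
  clear_value a b q
  have iab : (inner ℝ a b : ℝ) = c ^ 2 / 2 := by
    have := norm_sub_sq_real a b
    rw [nab, na, nb] at this; linarith
  have iqb : (inner ℝ q b : ℝ) = c ^ 2 / 2 := by
    have := norm_sub_sq_real q b
    rw [nqb, nq, nb] at this; linarith
  have iqa : (inner ℝ q a : ℝ) = c ^ 2 / 2 := by
    have := norm_sub_sq_real q a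
    rw [nqa, nq, na] at this; linarith
  have iba : (inner ℝ b a : ℝ) = c ^ 2 / 2 := by rw [real_inner_comm]; exact iab
  have ibq : (inner ℝ b q : ℝ) = c ^ 2 / 2 := by rw [real_inner_comm]; exact iqb
  have iaq : (inner ℝ a q : ℝ) = c ^ 2 / 2 := by rw [real_inner_comm]; exact iqa
  have ibb : (inner ℝ b b : ℝ) = c ^ 2 := by rw [real_inner_self_eq_norm_sq, nb]
  have iaa : (inner ℝ a a : ℝ) = c ^ 2 := by rw [real_inner_self_eq_norm_sq, na]
  have iqq : (inner ℝ q q : ℝ) = c ^ 2 := by rw [real_inner_self_eq_norm_sq, nq]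
  have hbne : b ≠ 0 := by
    intro h; rw [h] at nb; simp at nb; exact hc0 nb.symm
  have hvne : q - a ≠ 0 := by
    intro h; rw [h] at nqa; simp at nqa; exact hc0 nqa.symm
  have huv : (inner ℝ b (q - a) : ℝ) = 0 := by
    simp only [inner_sub_right]; linarith
  have hw1 : (inner ℝ b (a + q - b) : ℝ) = 0 := by
    simp only [inner_sub_right, inner_add_right]; linarith
  have hw2 : (inner ℝ (q - a) (a + q - b) : ℝ) = 0 := by
    simp only [inner_sub_left, inner_sub_right, inner_add_right]; linarith
  have hw : a + q - b = 0 := eq_zero_of_inner_eq_zero hbne hvne huv hw1 hw2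
  have hbaq : b = a + q := (sub_eq_zero.mp hw).symm
  have hfin : c ^ 2 = 3 * c ^ 2 := by
    have h := norm_add_sq_real a q
    rw [← hbaq, nb, iaq, na, nq] at h
    linarith
  have hc2 : c ^ 2 = 0 := by linarith
  exact hc0 (by simpa using sq_eq_zero_iff.mp hc2)

lemma center_ne {O A B : E} (h : dist O A = dist O B) (hAB : A ≠ B) : O ≠ A ∧ O ≠ B := by
  constructor
  · rintro rfl
    rw [dist_self] at h
    exact hAB (dist_eq_zero.mp h.symm)
  · rintro rfl
    rw [dist_self] at h
    exact hAB (dist_eq_zero.mp h).symm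

set_option maxHeartbeats 1000000 in
/-- No circle-center set is in general position: a circle-center set always contains
three distinct collinear points. -/
theorem circle_center_set_not_general_position (S : Set (EuclideanSpace ℝ (Fin 2)))
    (hline : ¬ Collinear ℝ S) (hcc : ContainsCircleCenters S) :
    ∃ A ∈ S, ∃ B ∈ S, ∃ C ∈ S,
      A ≠ B ∧ A ≠ C ∧ B ≠ C ∧
      Collinear ℝ ({A, B, C} : Set (EuclideanSpace ℝ (Fin 2))) := by
  -- find a non-collinear triple in S
  have hne : S.Nonempty := by
    rcases S.eq_empty_or_nonempty with h | h
    · exact absurd (h ▸ collinear_empty ℝ _) hline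
    · exact h
  obtain ⟨A, hA⟩ := hne
  have hB : ∃ B ∈ S, B ≠ A := by
    by_contra h
    push_neg at h
    have : S ⊆ {A} := fun x hx => h x hx
    exact hline ((collinear_singleton ℝ A).subset this)
  obtain ⟨B, hB, hBA⟩ := hB
  have hC : ∃ C ∈ S, ¬ Collinear ℝ ({A, B, C} : Set (EuclideanSpace ℝ (Fin 2))) := by
    by_contra h
    push_neg at h
    apply hline
    rw [collinear_iff_of_mem hA]
    refine ⟨B -ᵥ A, fun p hp => ?_⟩
    have hmem := (h p hp).mem_affineSpan_of_mem_of_ne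
      (by simp : A ∈ ({A, B, p} : Set (EuclideanSpace ℝ (Fin 2))))
      (by simp : B ∈ ({A, B, p} : Set (EuclideanSpace ℝ (Fin 2))))
      (by simp : p ∈ ({A, B, p} : Set (EuclideanSpace ℝ (Fin 2)))) hBA.symm
    rw [show p = (p -ᵥ A) +ᵥ A from (vsub_vadd p A).symm, vadd_left_mem_affineSpan_pair] at hmem
    obtain ⟨r, hr⟩ := hmem
    exact ⟨r, by rw [hr, vsub_vadd]⟩
  obtain ⟨C, hC, hncol⟩ := hC
  have hAB : A ≠ B := ne₁₂_of_not_collinear hncol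
  -- first circumcenter
  obtain ⟨O1, e1, e2⟩ := exists_equidistant hncol
  have hO1S : O1 ∈ S := hcc A hA B hB C hC hncol O1 e1 e2
  obtain ⟨hO1A, hO1B⟩ := center_ne e1 hAB
  by_cases hcol1 : Collinear ℝ ({A, B, O1} : Set (EuclideanSpace ℝ (Fin 2)))
  · exact ⟨A, hA, B, hB, O1, hO1S, hAB, hO1A.symm, hO1B.symm, hcol1⟩
  -- second circumcenter
  obtain ⟨O2, f1, f2⟩ := exists_equidistant hcol1
  have hO2S : O2 ∈ S := hcc A hA B hB O1 hO1S hcol1 O2 f1 f2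
  obtain ⟨hO2A, hO2B⟩ := center_ne f1 hAB
  have hO2O1 : O2 ≠ O1 := by
    intro h
    rw [h, dist_self] at f2
    exact hO1A (dist_eq_zero.mp f2)
  by_cases hcol2 : Collinear ℝ ({A, B, O2} : Set (EuclideanSpace ℝ (Fin 2)))
  · exact ⟨A, hA, B, hB, O2, hO2S, hAB, hO2A.symm, hO2B.symm, hcol2⟩
  -- third circumcenter
  obtain ⟨O3, g1, g2⟩ := exists_equidistant hcol2
  have hO3S : O3 ∈ S := hcc A hA B hB O2 hO2S hcol2 O3 g1 g2
  obtain ⟨hO3A, hO3B⟩ := center_ne g1 hAB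
  have hO3O2 : O3 ≠ O2 := by
    intro h
    rw [h, dist_self] at g2
    exact hO2A (dist_eq_zero.mp g2)
  by_cases hO3O1 : O3 = O1
  · -- hard case: O3 = O1, triangle A O1 O2 is "equilateral"
    have g2 : dist O1 A = dist O1 O2 := hO3O1 ▸ g2
    by_cases hcol3 : Collinear ℝ ({A, O1, O2} : Set (EuclideanSpace ℝ (Fin 2)))
    · exact ⟨A, hA, O1, hO1S, O2, hO2S, hO1A.symm, hO2A.symm, hO2O1.symm, hcol3⟩
    obtain ⟨O4, k1, k2⟩ := exists_equidistant hcol3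
    have hO4S : O4 ∈ S := hcc A hA O1 hO1S O2 hO2S hcol3 O4 k1 k2
    obtain ⟨hO4A, hO4O1⟩ := center_ne k1 hO1A.symm
    have hO1O2 : O1 ≠ O2 := hO2O1.symm
    -- common distance value
    have hAeq : dist A O1 = dist A O2 := by
      rw [dist_comm A O1, dist_comm A O2, g2]
      rw [dist_comm O1 O2, ← f2, dist_comm O2 A]
    have hBeq : dist B O1 = dist B O2 := by
      rw [dist_comm B O1, ← e1, dist_comm B O2, ← f1, g2, dist_comm O1 O2, ← f2]
    have hO4eq : dist O4 O1 = dist O4 O2 := by rw [← k1, k2]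
    have hcolABO4 : Collinear ℝ ({A, B, O4} : Set (EuclideanSpace ℝ (Fin 2))) :=
      collinear_of_dist_eq hO1O2 hAeq hBeq hO4eq
    have hO4B : O4 ≠ B := by
      intro h
      have k1h : dist B A = dist B O1 := by rw [← h]; exact k1
      have k2h : dist B A = dist B O2 := by rw [← h]; exact k2
      have cAB := dist_comm A B
      have cAO1 := dist_comm A O1
      have cAO2 := dist_comm A O2
      have cBO1 := dist_comm B O1
      have cBO2 := dist_comm B O2
      have cO1O2 := dist_comm O1 O2
      have d1 : dist A O1 = dist A B := by linarith
      have d2 : dist A O2 = dist A B := by linarith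
      have d3 : dist B O1 = dist A B := by linarith
      have d4 : dist B O2 = dist A B := by linarith
      have d5 : dist O1 O2 = dist A B := by linarith
      exact no_four_equidistant hAB d1 d2 d3 d4 d5
    exact ⟨A, hA, B, hB, O4, hO4S, hAB, hO4A.symm, hO4B.symm, hcolABO4⟩
  · -- easy case: O1, O2, O3 distinct, all on perpendicular bisector of A B
    exact ⟨O1, hO1S, O2, hO2S, O3, hO3S, hO2O1.symm, fun h => hO3O1 h.symm, hO3O2.symm,
      collinear_of_dist_eq hAB e1 f1 g1⟩
end

section
/- Let α be a real number such that α/π is not of the form n/2^k for any integer n and natural number k (so that 2^j·α is never an integer multiple of π, and the sequence Q_j is well defined for all j). Then the sequence (cot(2^j·α))_{j ≥ 0} is eventually periodic — i.e. there exist L ≥ 0 and P ≥ 1 with cot(2^{j+P}·α) = cot(2^j·α) for all j ≥ L — if and only if α/π is a rational number. -/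
open Real


lemma cot_periodic' : Function.Periodic Real.cot π := fun x => by
  rw [Real.cot_eq_cos_div_sin, Real.cot_eq_cos_div_sin, Real.sin_add_pi, Real.cos_add_pi,
    neg_div_neg_eq]

lemma sin_pow_ne (α : ℝ) (hα : ∀ (n : ℤ) (k : ℕ), α / π ≠ (n : ℝ) / 2 ^ k) (j : ℕ) :
    Real.sin ((2 : ℝ) ^ j * α) ≠ 0 := by
  intro h
  obtain ⟨n, hn⟩ := Real.sin_eq_zero_iff.1 h
  apply hα n j
  have hπ := Real.pi_ne_zero
  have h2 : (2 : ℝ) ^ j ≠ 0 := by positivity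
  field_simp
  linarith [hn]

lemma cot_eq_sub (a b : ℝ) (ha : Real.sin a ≠ 0) (hb : Real.sin b ≠ 0)
    (h : Real.cot a = Real.cot b) : ∃ n : ℤ, a - b = n * π := by
  rw [Real.cot_eq_cos_div_sin, Real.cot_eq_cos_div_sin, div_eq_div_iff ha hb] at h
  have : Real.sin (a - b) = 0 := by rw [Real.sin_sub]; nlinarith
  obtain ⟨n, hn⟩ := Real.sin_eq_zero_iff.1 this
  exact ⟨n, hn.symm⟩

/-- If α/π is not a dyadic rational n/2^k, then the sequence cot(2ʲ·α) is eventually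
periodic if and only if α/π is rational. -/
theorem cot_doubling_eventually_periodic_iff (α : ℝ)
    (hα : ∀ (n : ℤ) (k : ℕ), α / π ≠ (n : ℝ) / 2 ^ k) :
    (∃ L : ℕ, ∃ P : ℕ, 1 ≤ P ∧
        ∀ j : ℕ, L ≤ j → Real.cot ((2 : ℝ) ^ (j + P) * α) = Real.cot ((2 : ℝ) ^ j * α)) ↔
      ∃ q : ℚ, α / π = (q : ℝ) := by
  have hπ := Real.pi_ne_zero
  constructor
  · rintro ⟨L, P, hP, h⟩
    obtain ⟨n, hn⟩ := cot_eq_sub _ _ (sin_pow_ne α hα (L + P)) (sin_pow_ne α hα L) (h L le_rfl)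
    -- (2^(L+P) - 2^L) * α = n * π
    have hd : (0:ℝ) < 2 ^ (L + P) - 2 ^ L := by
      have : (2:ℝ) ^ L < 2 ^ (L + P) := by
        apply pow_lt_pow_right₀ one_lt_two; omega
      linarith
    refine ⟨(n : ℚ) / ((2:ℚ) ^ (L + P) - 2 ^ L), ?_⟩
    have hd' : ((2:ℚ) ^ (L + P) - 2 ^ L) ≠ 0 := by
      have : ((2:ℚ):ℝ) = 2 := by norm_num
      intro h0
      apply absurd hd
      push_neg
      have : ((2:ℚ) ^ (L + P) - 2 ^ L : ℚ) = 0 → ((2:ℝ) ^ (L + P) - 2 ^ L : ℝ) = 0 := by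
        intro hh; exact_mod_cast congrArg (Rat.cast : ℚ → ℝ) hh
      simp [this h0]
    push_cast
    rw [div_eq_div_iff hπ (by push_cast at hd ⊢; linarith)]
    push_cast
    linarith [hn]
  · rintro ⟨q, hq⟩
    have hα' : α = (q : ℝ) * π := by field_simp at hq; linarith [hq]
    haveI : NeZero q.den := ⟨q.den_nz⟩
    obtain ⟨i, j, hij, hfeq⟩ := Finite.exists_ne_map_eq_of_infinite
      (fun m : ℕ => (2 : ZMod q.den) ^ m * (q.num : ZMod q.den))
    wlog hlt : i < j generalizing i j
    · exact this j i hij.symm hfeq.symm (by omega)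
    refine ⟨i, j - i, by omega, fun m hm => ?_⟩
    set P := j - i with hPdef
    -- divisibility
    have hdvd : (q.den : ℤ) ∣ (2 ^ (m + P) - 2 ^ m) * q.num := by
      have : ((((2:ℤ) ^ (m + P) - 2 ^ m) * q.num : ℤ) : ZMod q.den) = 0 := by
        push_cast
        have h1 : (2 : ZMod q.den) ^ (m + P) * q.num = 2 ^ m * q.num := by
          have hm1 : m + P = (m - i) + j := by omega
          have hm2 : m = (m - i) + i := by omega
          rw [hm1]
          conv_rhs => rw [hm2]
          rw [pow_add, pow_add, mul_assoc, mul_assoc, hfeq]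
        rw [sub_mul, h1, sub_self]
      exact (ZMod.intCast_zmod_eq_zero_iff_dvd _ _).1 this
    obtain ⟨k, hk⟩ := hdvd
    have hden : ((q.den : ℝ)) ≠ 0 := by exact_mod_cast q.den_nz
    have key : (2:ℝ) ^ (m + P) * α = (2:ℝ) ^ m * α + k * π := by
      rw [hα', Rat.cast_def]
      have hkr : ((2:ℝ) ^ (m + P) - 2 ^ m) * q.num = q.den * k := by exact_mod_cast hk
      field_simp
      linear_combination hkr
    rw [key]
    have h2 := cot_periodic'.sub_int_mul_eq (x := (2:ℝ) ^ m * α + k * π) (n := k)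
    simpa using h2.symm
end
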